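/- arXiv:1606.03563 — 2 statements merged into one kernel-verified Lean document; each statement's English description precedes it below -/
import Mathlib

section
/- Let n ≥ 4 and let i,j,k ∈ {1,…,n} be distinct. For any pair l < m with |{l,m} ∩ {i,j,k}| < 2, the defining word of φ_n(b_{lm}) (which is in good condition) satisfies w_{(i,j,k)}(φ_n(b_{lm})) = 1 in F_n^3. -/
namespace GnkBrunnian

/-! ## Index types for generators -/

/-- Validity of a pair index: `1 ≤ i < j ≤ n`. -/
abbrev P2ok (n : ℕ) (p : ℕ × ℕ) : Prop := 1 ≤ p.1 ∧ p.1 < p.2 ∧ p.2 ≤ n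

/-- Index type for the generators `a_{ij}` of `G_n^2` (and `b_{ij}` of `PB_n`). -/
abbrev PIdx (n : ℕ) := {p : ℕ × ℕ // P2ok n p}

/-- Validity of a triple index: `1 ≤ i < j < k ≤ n`. -/
abbrev T3ok (n : ℕ) (t : ℕ × ℕ × ℕ) : Prop :=
  1 ≤ t.1 ∧ t.1 < t.2.1 ∧ t.2.1 < t.2.2 ∧ t.2.2 ≤ n

/-- Index type for the generators `a_{ijk}` of `G_n^3`. -/
abbrev TIdx (n : ℕ) := {t : ℕ × ℕ × ℕ // T3ok n t}

def sort2 (a b : ℕ) : ℕ × ℕ := (min a b, max a b)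

def sort3 (a b c : ℕ) : ℕ × ℕ × ℕ :=
  (min a (min b c), a + b + c - min a (min b c) - max a (max b c), max a (max b c))

def pairSet {n : ℕ} (p : PIdx n) : Finset ℕ := {p.1.1, p.1.2}

def tripSet {n : ℕ} (t : TIdx n) : Finset ℕ := {t.1.1, t.1.2.1, t.1.2.2}

/-- Reindexing after deleting the strand `m` : indices above `m` are decreased by one. -/
def del (m x : ℕ) : ℕ := if m < x then x - 1 else x

/-! ## The group `G_n^2` -/

/-- The free-group letter `a_{\{a,b\}}` (trivial if the index is out of range). -/
def fgen2 (n a b : ℕ) : FreeGroup (PIdx n) :=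
  if h : P2ok n (sort2 a b) then FreeGroup.of ⟨sort2 a b, h⟩ else 1

/-- The defining relators of `G_n^2`. -/
def rels2 (n : ℕ) : Set (FreeGroup (PIdx n)) :=
  {r | ∃ a : PIdx n, r = .of a * .of a} ∪
  {r | ∃ i j k l : ℕ,
      1 ≤ i ∧ i ≤ n ∧ 1 ≤ j ∧ j ≤ n ∧ 1 ≤ k ∧ k ≤ n ∧ 1 ≤ l ∧ l ≤ n ∧
      i ≠ j ∧ i ≠ k ∧ i ≠ l ∧ j ≠ k ∧ j ≠ l ∧ k ≠ l ∧
      r = fgen2 n i j * fgen2 n k l * (fgen2 n i j)⁻¹ * (fgen2 n k l)⁻¹} ∪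
  {r | ∃ i j k : ℕ,
      1 ≤ i ∧ i ≤ n ∧ 1 ≤ j ∧ j ≤ n ∧ 1 ≤ k ∧ k ≤ n ∧ i ≠ j ∧ i ≠ k ∧ j ≠ k ∧
      r = fgen2 n i j * fgen2 n i k * fgen2 n j k *
          (fgen2 n j k * fgen2 n i k * fgen2 n i j)⁻¹}

/-- The group `G_n^2`. -/
abbrev G2 (n : ℕ) := PresentedGroup (rels2 n)

/-- The generator `a_{\{a,b\}}` of `G_n^2` (trivial if the index is out of range). -/
def ggen2 (n a b : ℕ) : G2 n :=
  if h : P2ok n (sort2 a b) then PresentedGroup.of ⟨sort2 a b, h⟩ else 1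

/-- The element of `G_n^2` represented by a word in the generators. -/
def toG2 {n : ℕ} (β : List (PIdx n)) : G2 n :=
  (β.map fun a => (PresentedGroup.of a : G2 n)).prod

/-! ## The group `G_n^3` -/

/-- The free-group letter `a_{\{a,b,c\}}` (trivial if the index is out of range). -/
def fgen3 (n a b c : ℕ) : FreeGroup (TIdx n) :=
  if h : T3ok n (sort3 a b c) then FreeGroup.of ⟨sort3 a b c, h⟩ else 1

/-- The defining relators of `G_n^3`. -/
def rels3 (n : ℕ) : Set (FreeGroup (TIdx n)) :=
  {r | ∃ a : TIdx n, r = .of a * .of a} ∪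
  {r | ∃ a b : TIdx n, (tripSet a ∩ tripSet b).card < 2 ∧
      r = .of a * .of b * (.of a)⁻¹ * (.of b)⁻¹} ∪
  {r | ∃ i j k l : ℕ,
      1 ≤ i ∧ i ≤ n ∧ 1 ≤ j ∧ j ≤ n ∧ 1 ≤ k ∧ k ≤ n ∧ 1 ≤ l ∧ l ≤ n ∧
      i ≠ j ∧ i ≠ k ∧ i ≠ l ∧ j ≠ k ∧ j ≠ l ∧ k ≠ l ∧
      r = fgen3 n i j k * fgen3 n i j l * fgen3 n i k l * fgen3 n j k l *
          (fgen3 n j k l * fgen3 n i k l * fgen3 n i j l * fgen3 n i j k)⁻¹}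

/-- The group `G_n^3`. -/
abbrev G3 (n : ℕ) := PresentedGroup (rels3 n)

/-- The generator `a_{\{a,b,c\}}` of `G_n^3` (trivial if the index is out of range). -/
def ggen3 (n a b c : ℕ) : G3 n :=
  if h : T3ok n (sort3 a b c) then PresentedGroup.of ⟨sort3 a b c, h⟩ else 1

/-- The element of `G_n^3` represented by a word in the generators. -/
def toG3 {n : ℕ} (β : List (TIdx n)) : G3 n :=
  (β.map fun a => (PresentedGroup.of a : G3 n)).prod

/-! ## The pure braid group `PB_n` (standard Artin/Birman presentation) -/

/-- The defining relators of the pure braid group on `n` strands, in the standard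
presentation on the generators `b_{ij} = A_{ij}`, `1 ≤ i < j ≤ n`. -/
def relsPB (n : ℕ) : Set (FreeGroup (PIdx n)) :=
  {x | ∃ r s i j : ℕ, P2ok n (r, s) ∧ P2ok n (i, j) ∧ (s < i ∨ (i < r ∧ s < j)) ∧
      x = (fgen2 n r s)⁻¹ * fgen2 n i j * fgen2 n r s * (fgen2 n i j)⁻¹} ∪
  {x | ∃ r s j : ℕ, 1 ≤ r ∧ r < s ∧ s < j ∧ j ≤ n ∧
      x = (fgen2 n r s)⁻¹ * fgen2 n s j * fgen2 n r s *
          (fgen2 n r j * fgen2 n s j * (fgen2 n r j)⁻¹)⁻¹} ∪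
  {x | ∃ r s j : ℕ, 1 ≤ r ∧ r < s ∧ s < j ∧ j ≤ n ∧
      x = (fgen2 n r s)⁻¹ * fgen2 n r j * fgen2 n r s *
          ((fgen2 n r j * fgen2 n s j) * fgen2 n r j * (fgen2 n r j * fgen2 n s j)⁻¹)⁻¹} ∪
  {x | ∃ r i s j : ℕ, 1 ≤ r ∧ r < i ∧ i < s ∧ s < j ∧ j ≤ n ∧
      x = (fgen2 n r s)⁻¹ * fgen2 n i j * fgen2 n r s *
          ((fgen2 n r j * fgen2 n s j * (fgen2 n r j)⁻¹ * (fgen2 n s j)⁻¹) * fgen2 n i j *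
           (fgen2 n r j * fgen2 n s j * (fgen2 n r j)⁻¹ * (fgen2 n s j)⁻¹)⁻¹)⁻¹}

/-- The pure braid group on `n` strands. -/
abbrev PB (n : ℕ) := PresentedGroup (relsPB n)

/-- The standard generator `b_{ij}` of `PB_n` (trivial if the index is out of range). -/
def pbgen (n a b : ℕ) : PB n :=
  if h : P2ok n (sort2 a b) then PresentedGroup.of ⟨sort2 a b, h⟩ else 1

/-! ## The elements `c^n_{i,j}` and the homomorphism `φ_n` -/

/-- `c^n_{i,j} = (∏_{k=j+1}^{n} a_{ijk}) * (∏_{k=1, k∉{i,j}}^{j-1} a_{ijk}) ∈ G_n^3`. -/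
def cElt (n i j : ℕ) : G3 n :=
  (((List.range' (j + 1) (n - j)).map fun k => ggen3 n i j k).prod) *
  (((List.range' 1 (j - 1)).map fun k => ggen3 n i j k).prod)

/-- The image of `b_{ij}` under `φ_n`:
`(c^n_{i,i+1})⁻¹ ⋯ (c^n_{i,j-1})⁻¹ (c^n_{i,j})² c^n_{i,j-1} ⋯ c^n_{i,i+1}`. -/
def phiElt (n i j : ℕ) : G3 n :=
  (((List.range' (i + 1) (j - 1 - i)).map fun m => (cElt n i m)⁻¹).prod) *
  (cElt n i j) ^ 2 *
  (((List.range' (i + 1) (j - 1 - i)).reverse.map fun m => cElt n i m).prod)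

/-- `q` is the strand-deletion homomorphism `q_m : G_n^3 → G_{n-1}^3`. -/
def IsShift3 (n m : ℕ) (q : G3 n →* G3 (n - 1)) : Prop :=
  ∀ i j k : ℕ, 1 ≤ i → i < j → j < k → k ≤ n →
    q (ggen3 n i j k) =
      if m = i ∨ m = j ∨ m = k then 1
      else ggen3 (n - 1) (del m i) (del m j) (del m k)

/-- `p` is the strand-deletion homomorphism `p_m : PB_n → PB_{n-1}`. -/
def IsShiftPB (n m : ℕ) (p : PB n →* PB (n - 1)) : Prop :=
  ∀ i j : ℕ, 1 ≤ i → i < j → j ≤ n →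
    p (pbgen n i j) =
      if m = i ∨ m = j then 1 else pbgen (n - 1) (del m i) (del m j)

/-- `φ` is the Manturov–Nikonov homomorphism `φ_n : PB_n → G_n^3`. -/
def IsPhi (n : ℕ) (φ : PB n →* G3 n) : Prop :=
  ∀ i j : ℕ, 1 ≤ i → i < j → j ≤ n → φ (pbgen n i j) = phiElt n i j

/-! ## Words and good condition -/

def good2 {n : ℕ} (β : List (PIdx n)) : Prop := ∀ a : PIdx n, Even (β.count a)

def good3 {n : ℕ} (β : List (TIdx n)) : Prop := ∀ a : TIdx n, Even (β.count a)

/-! ## Free products of copies of `ℤ/2` -/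

/-- The free product of copies of `ℤ/2ℤ` indexed by `ι`. -/
abbrev FP2 (ι : Type) := PresentedGroup {r : FreeGroup ι | ∃ a : ι, r = .of a * .of a}

/-- Indices `l ∈ {1,…,n} \ {i,j,k}`. -/
abbrev SIdx3 (n i j k : ℕ) := {l : ℕ // (1 ≤ l ∧ l ≤ n) ∧ l ≠ i ∧ l ≠ j ∧ l ≠ k}

/-- The group `F_n^3` (for the fixed triple `(i,j,k)`). -/
abbrev F3 (n i j k : ℕ) := FP2 (SIdx3 n i j k → ZMod 2 × ZMod 2)

/-- Indices `k ∈ {1,…,n} \ {i,j}`. -/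
abbrev SIdx2 (n i j : ℕ) := {l : ℕ // (1 ≤ l ∧ l ≤ n) ∧ l ≠ i ∧ l ≠ j}

/-- The group `F_n^2` (for the fixed pair `(i,j)`). -/
abbrev F2 (n i j : ℕ) := FP2 (SIdx2 n i j → ZMod 2)

/-! ## The MN-invariants `w_{(i,j)}` and `w_{(i,j,k)}` -/

/-- The number of occurrences of the generator `a_{\{a,b\}}` in a word over `G_n^2`. -/
def cnt2 {n : ℕ} (β : List (PIdx n)) (a b : ℕ) : ℕ :=
  (β.filter fun x => decide (pairSet x = ({a, b} : Finset ℕ))).length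

/-- The number of occurrences of the generator `a_{\{a,b,c\}}` in a word over `G_n^3`. -/
def cnt3 {n : ℕ} (β : List (TIdx n)) (a b c : ℕ) : ℕ :=
  (β.filter fun x => decide (tripSet x = ({a, b, c} : Finset ℕ))).length

/-- `i_c` for an occurrence of `a_{ij}` with prefix `pre`: `i_c(k) = N_{ik} + N_{jk} (mod 2)`. -/
def iC2 {n : ℕ} (i j : ℕ) (pre : List (PIdx n)) : SIdx2 n i j → ZMod 2 :=
  fun k => ((cnt2 pre i k.1 + cnt2 pre j k.1 : ℕ) : ZMod 2)

/-- The MN-invariant `w_{(i,j)}` of a word over `G_n^2`. -/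
def w2 {n : ℕ} (i j : ℕ) (β : List (PIdx n)) : F2 n i j :=
  (((β.zipIdx.map Prod.swap).filter fun x => decide (pairSet x.2 = ({i, j} : Finset ℕ))).map
    fun x => (PresentedGroup.of (iC2 i j (β.take x.1)) : F2 n i j)).prod

/-- `i_c` for an occurrence of `a_{ijk}` with prefix `pre`:
`i_c(l) = (N_{jkl} + N_{ijl}, N_{ikl} + N_{ijl}) (mod 2)`. -/
def iC3 {n : ℕ} (i j k : ℕ) (pre : List (TIdx n)) : SIdx3 n i j k → ZMod 2 × ZMod 2 :=
  fun l => (((cnt3 pre j k l.1 + cnt3 pre i j l.1 : ℕ) : ZMod 2),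
            ((cnt3 pre i k l.1 + cnt3 pre i j l.1 : ℕ) : ZMod 2))

/-- The MN-invariant `w_{(i,j,k)}` of a word over `G_n^3`. -/
def w3 {n : ℕ} (i j k : ℕ) (β : List (TIdx n)) : F3 n i j k :=
  (((β.zipIdx.map Prod.swap).filter fun x => decide (tripSet x.2 = ({i, j, k} : Finset ℕ))).map
    fun x => (PresentedGroup.of (iC3 i j k (β.take x.1)) : F3 n i j k)).prod

/-! ## Explicit words for `c^n_{i,j}` and `φ_n(b_{ij})` -/

def tripMkS (n a b c : ℕ) : Option (TIdx n) :=
  if h : T3ok n (sort3 a b c) then some ⟨sort3 a b c, h⟩ else none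

def pairMkS (n a b : ℕ) : Option (PIdx n) :=
  if h : P2ok n (sort2 a b) then some ⟨sort2 a b, h⟩ else none

/-- The defining word of `c^n_{i,j}`. -/
def cWord (n i j : ℕ) : List (TIdx n) :=
  ((List.range' (j + 1) (n - j)).filterMap fun k => tripMkS n i j k) ++
  ((List.range' 1 (j - 1)).filterMap fun k => tripMkS n i j k)

/-- The defining word of `φ_n(b_{ij})`, with the inverses of the `c`-words expanded using
`a⁻¹ = a` for generators (i.e. by reversing the words). -/
def phiWord (n i j : ℕ) : List (TIdx n) :=
  (((List.range' (i + 1) (j - 1 - i)).map fun m => (cWord n i m).reverse).flatten) ++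
  cWord n i j ++ cWord n i j ++
  (((List.range' (i + 1) (j - 1 - i)).reverse.map fun m => cWord n i m).flatten)

/-! ## The group `G_{n,p}^2` (parity) -/

/-- Index type for the generators `a_{ij}^ε` of `G_{n,p}^2`. -/
abbrev PPIdx (n : ℕ) := PIdx n × ZMod 2

def fgenP2 (n a b : ℕ) (e : ZMod 2) : FreeGroup (PPIdx n) :=
  if h : P2ok n (sort2 a b) then FreeGroup.of (⟨sort2 a b, h⟩, e) else 1

/-- The defining relators of `G_{n,p}^2`. -/
def relsP2 (n : ℕ) : Set (FreeGroup (PPIdx n)) :=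
  {r | ∃ a : PPIdx n, r = .of a * .of a} ∪
  {r | ∃ (i j k l : ℕ) (e e' : ZMod 2),
      1 ≤ i ∧ i ≤ n ∧ 1 ≤ j ∧ j ≤ n ∧ 1 ≤ k ∧ k ≤ n ∧ 1 ≤ l ∧ l ≤ n ∧
      i ≠ j ∧ i ≠ k ∧ i ≠ l ∧ j ≠ k ∧ j ≠ l ∧ k ≠ l ∧
      r = fgenP2 n i j e * fgenP2 n k l e' * (fgenP2 n i j e)⁻¹ * (fgenP2 n k l e')⁻¹} ∪
  {r | ∃ (i j k : ℕ) (e1 e2 e3 : ZMod 2),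
      1 ≤ i ∧ i < j ∧ j < k ∧ k ≤ n ∧ e1 + e2 + e3 = 0 ∧
      r = fgenP2 n i j e1 * fgenP2 n i k e2 * fgenP2 n j k e3 *
          (fgenP2 n j k e3 * fgenP2 n i k e2 * fgenP2 n i j e1)⁻¹}

/-- The group `G_{n,p}^2`. -/
abbrev GP2 (n : ℕ) := PresentedGroup (relsP2 n)

/-- The element of `G_{n,p}^2` represented by a word in the generators. -/
def toGP2 {n : ℕ} (β : List (PPIdx n)) : GP2 n :=
  (β.map fun a => (PresentedGroup.of a : GP2 n)).prod

/-! ## The parity invariant `w^p_{ij}` on `G_{n,p}^2` -/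

/-- The number of occurrences of `a_{\{a,b\}}^e` in a word over `G_{n,p}^2`. -/
def cntP2 {n : ℕ} (β : List (PPIdx n)) (a b : ℕ) (e : ZMod 2) : ℕ :=
  (β.filter fun x => decide (pairSet x.1 = ({a, b} : Finset ℕ) ∧ x.2 = e)).length

/-- `i^p_c` for an occurrence of `a_{ij}^e` with prefix `pre`. -/
def iCP2 {n : ℕ} (i j : ℕ) (e : ZMod 2) (pre : List (PPIdx n)) : SIdx2 n i j → ZMod 2 :=
  fun k =>
    if e = 0 then ((cntP2 pre i k.1 0 + cntP2 pre j k.1 0 : ℕ) : ZMod 2)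
    else ((cntP2 pre i k.1 0 + cntP2 pre j k.1 1 : ℕ) : ZMod 2)

/-- The invariant `w^p_{ij}` of a word over `G_{n,p}^2`. -/
def wP2 {n : ℕ} (i j : ℕ) (β : List (PPIdx n)) : F2 n i j :=
  (((β.zipIdx.map Prod.swap).filter fun x => decide (pairSet x.2.1 = ({i, j} : Finset ℕ))).map
    fun x => (PresentedGroup.of (iCP2 i j x.2.2 (β.take x.1)) : F2 n i j)).prod

/-! ## The map `ψ_l : G_{n+1}^2 → G_{n,p}^2` -/

/-- The word over `G_{n,p}^2` obtained from a word over `G_{n+1}^2` by deleting the strand `l`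
and recording parities. -/
def psiWord (n l : ℕ) (β : List (PIdx (n + 1))) : List (PPIdx n) :=
  (β.zipIdx.map Prod.swap).filterMap fun x =>
    if l = x.2.1.1 ∨ l = x.2.1.2 then none
    else (pairMkS n (del l x.2.1.1) (del l x.2.1.2)).map fun p =>
      (p, ((cnt2 (β.take x.1) x.2.1.1 l + cnt2 (β.take x.1) x.2.1.2 l : ℕ) : ZMod 2))

/-! ## The group `G_{n,p}^3` (parity) -/

/-- Index type for the generators `a_{ijk}^ε` of `G_{n,p}^3`. -/
abbrev TPIdx (n : ℕ) := TIdx n × ZMod 2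

def fgenP3 (n a b c : ℕ) (e : ZMod 2) : FreeGroup (TPIdx n) :=
  if h : T3ok n (sort3 a b c) then FreeGroup.of (⟨sort3 a b c, h⟩, e) else 1

/-- The defining relators of `G_{n,p}^3`. -/
def relsP3 (n : ℕ) : Set (FreeGroup (TPIdx n)) :=
  {r | ∃ a : TPIdx n, r = .of a * .of a} ∪
  {r | ∃ a b : TPIdx n, (tripSet a.1 ∩ tripSet b.1).card < 2 ∧
      r = (.of a * .of b) ^ 2} ∪
  {r | ∃ (i j k l : ℕ) (ei ej ek el : ZMod 2),
      1 ≤ i ∧ i ≤ n ∧ 1 ≤ j ∧ j ≤ n ∧ 1 ≤ k ∧ k ≤ n ∧ 1 ≤ l ∧ l ≤ n ∧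
      i ≠ j ∧ i ≠ k ∧ i ≠ l ∧ j ≠ k ∧ j ≠ l ∧ k ≠ l ∧
      (if max (max i j) (max k l) = i then ej + ek + el
       else if max (max i j) (max k l) = j then ei + ek + el
       else if max (max i j) (max k l) = k then ei + ej + el
       else ei + ej + ek) = 0 ∧
      r = (fgenP3 n i j k el * fgenP3 n i j l ek * fgenP3 n i k l ej * fgenP3 n j k l ei) ^ 2}

/-- The group `G_{n,p}^3`. -/
abbrev GP3 (n : ℕ) := PresentedGroup (relsP3 n)

/-- The element of `G_{n,p}^3` represented by a word in the generators. -/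
def toGP3 {n : ℕ} (β : List (TPIdx n)) : GP3 n :=
  (β.map fun a => (PresentedGroup.of a : GP3 n)).prod

/-! ## The map `f : G_{n+1}^3 → G_{n,p}^3` -/

/-- The word over `G_{n,p}^3` obtained from a word over `G_{n+1}^3` by deleting the letters
containing the index `n+1` and recording parities. -/
def fWord (n : ℕ) (β : List (TIdx (n + 1))) : List (TPIdx n) :=
  (β.zipIdx.map Prod.swap).filterMap fun x =>
    if x.2.1.2.2 = n + 1 then none
    else (tripMkS n x.2.1.1 x.2.1.2.1 x.2.1.2.2).map fun t =>
      (t, ((cnt3 (β.take x.1) x.2.1.2.1 x.2.1.2.2 (n + 1) +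
            cnt3 (β.take x.1) x.2.1.1 x.2.1.2.2 (n + 1) : ℕ) : ZMod 2))

/-! ## The parity invariant `w^p_{ijk}` on `G_{n,p}^3` -/

/-- The group `F_n^3` with values in `ℤ/2` (for the parity invariant). -/
abbrev F3p (n i j k : ℕ) := FP2 (SIdx3 n i j k → ZMod 2)

/-- The number of occurrences of `a_{\{a,b,c\}}^e` in a word over `G_{n,p}^3`. -/
def cntP3 {n : ℕ} (β : List (TPIdx n)) (a b c : ℕ) (e : ZMod 2) : ℕ :=
  (β.filter fun x => decide (tripSet x.1 = ({a, b, c} : Finset ℕ) ∧ x.2 = e)).length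

/-- `i^p_c` for an occurrence of `a_{ijk}^e` with prefix `pre` (here `k > i, j`). -/
def iCP3 {n : ℕ} (i j k : ℕ) (e : ZMod 2) (pre : List (TPIdx n)) : SIdx3 n i j k → ZMod 2 :=
  fun l =>
    if e = 0 then
      (if k < l.1 then
        ((cntP3 pre i k l.1 0 + cntP3 pre j k l.1 0 + cntP3 pre i j l.1 1 : ℕ) : ZMod 2)
      else ((cntP3 pre i k l.1 0 + cntP3 pre j k l.1 0 : ℕ) : ZMod 2))
    else
      (if k < l.1 then
        ((cntP3 pre i k l.1 0 + cntP3 pre j k l.1 1 + cntP3 pre i j l.1 0 : ℕ) : ZMod 2)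
      else ((cntP3 pre i k l.1 0 + cntP3 pre j k l.1 1 : ℕ) : ZMod 2))

/-- The invariant `w^p_{ijk}` of a word over `G_{n,p}^3`. -/
def wP3 {n : ℕ} (i j k : ℕ) (β : List (TPIdx n)) : F3p n i j k :=
  (((β.zipIdx.map Prod.swap).filter fun x => decide (tripSet x.2.1 = ({i, j, k} : Finset ℕ))).map
    fun x => (PresentedGroup.of (iCP3 i j k x.2.2 (β.take x.1)) : F3p n i j k)).prod

/-! ## Auxiliary lemmas for statement_8 -/

lemma fp2_sq {ι : Type} (b : ι) :
    (PresentedGroup.of b : FP2 ι) * PresentedGroup.of b = 1 := by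
  show (QuotientGroup.mk (FreeGroup.of b) : FP2 ι) * QuotientGroup.mk (FreeGroup.of b) = 1
  show (QuotientGroup.mk (FreeGroup.of b * FreeGroup.of b) : FP2 ι) = 1
  exact (QuotientGroup.eq_one_iff _).mpr (Subgroup.subset_normalClosure ⟨b, rfl⟩)

/-- shift homomorphism on a free product of `ℤ/2`'s indexed by functions -/
def sh {κ M : Type} [AddCommMonoid M] (g : κ → M) : FP2 (κ → M) →* FP2 (κ → M) :=
  PresentedGroup.toGroup (f := fun a => (PresentedGroup.of (fun l => a l + g l) : FP2 (κ → M)))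
    (by rintro r ⟨a, rfl⟩; simp [fp2_sq])

@[simp] lemma sh_of {κ M : Type} [AddCommMonoid M] (g : κ → M) (a : κ → M) :
    sh g (PresentedGroup.of a) = PresentedGroup.of (fun l => a l + g l) :=
  PresentedGroup.toGroup.of _

section W3aux

variable {n : ℕ}

lemma cnt3_append (l l' : List (TIdx n)) (a b c : ℕ) :
    cnt3 (l ++ l') a b c = cnt3 l a b c + cnt3 l' a b c := by
  simp [cnt3, List.filter_append]

lemma cnt3_cons (y : TIdx n) (l : List (TIdx n)) (a b c : ℕ) :
    cnt3 (y :: l) a b c = cnt3 [y] a b c + cnt3 l a b c := by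
  rw [show y :: l = [y] ++ l from rfl, cnt3_append]

lemma cnt3_reverse (l : List (TIdx n)) (a b c : ℕ) :
    cnt3 l.reverse a b c = cnt3 l a b c := by
  simp [cnt3, List.filter_reverse]

lemma cnt3_nil (a b c : ℕ) : cnt3 ([] : List (TIdx n)) a b c = 0 := rfl

lemma cnt3_single (x : TIdx n) (a b c : ℕ) :
    cnt3 [x] a b c = if tripSet x = ({a, b, c} : Finset ℕ) then 1 else 0 := by
  by_cases h : tripSet x = ({a, b, c} : Finset ℕ) <;> simp [cnt3, h]

variable (i j k : ℕ)

lemma iC3_cons (y : TIdx n) (pre : List (TIdx n)) :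
    iC3 i j k (y :: pre) = fun l => iC3 i j k pre l + iC3 i j k [y] l := by
  funext l
  have e1 := cnt3_cons y pre j k l.1
  have e2 := cnt3_cons y pre i j l.1
  have e3 := cnt3_cons y pre i k l.1
  simp only [iC3, e1, e2, e3, Prod.mk_add_mk, Prod.mk.injEq]
  constructor <;> · push_cast; ring

lemma natCast_even_zmod2 {m : ℕ} (h : Even m) : (m : ZMod 2) = 0 :=
  (ZMod.natCast_eq_zero_iff m 2).mpr h.two_dvd

lemma iC3_eq_zero (pre : List (TIdx n))
    (h : ∀ l : SIdx3 n i j k, Even (cnt3 pre j k l.1) ∧ Even (cnt3 pre i j l.1) ∧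
      Even (cnt3 pre i k l.1)) :
    iC3 i j k pre = iC3 i j k ([] : List (TIdx n)) := by
  funext l
  obtain ⟨h1, h2, h3⟩ := h l
  simp [iC3, cnt3_nil, Nat.cast_add, natCast_even_zmod2 h1, natCast_even_zmod2 h2,
    natCast_even_zmod2 h3]

/-- recursive computation of `w3` with an explicit prefix accumulator -/
def wAux (i j k : ℕ) : List (TIdx n) → List (TIdx n) → F3 n i j k
  | _, [] => 1
  | pre, x :: t =>
    (if tripSet x = ({i, j, k} : Finset ℕ) then
        (PresentedGroup.of (iC3 i j k pre) : F3 n i j k) else 1) *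
      wAux i j k (pre ++ [x]) t

@[simp] lemma wAux_nil (pre : List (TIdx n)) : wAux i j k pre [] = 1 := rfl

lemma wAux_cons (pre : List (TIdx n)) (x : TIdx n) (t : List (TIdx n)) :
    wAux i j k pre (x :: t) =
      (if tripSet x = ({i, j, k} : Finset ℕ) then
        (PresentedGroup.of (iC3 i j k pre) : F3 n i j k) else 1) *
      wAux i j k (pre ++ [x]) t := rfl

lemma wAux_append (β γ pre : List (TIdx n)) :
    wAux i j k pre (β ++ γ) = wAux i j k pre β * wAux i j k (pre ++ β) γ := by
  induction β generalizing pre with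
  | nil => simp
  | cons x t ih =>
    rw [List.cons_append, wAux_cons, wAux_cons, ih (pre ++ [x]), mul_assoc,
      List.append_assoc]
    rfl

lemma wAux_shift (y : TIdx n) (β pre : List (TIdx n)) :
    wAux i j k (y :: pre) β = sh (iC3 i j k [y]) (wAux i j k pre β) := by
  induction β generalizing pre with
  | nil => simp
  | cons x t ih =>
    rw [wAux_cons, wAux_cons, show (y :: pre) ++ [x] = y :: (pre ++ [x]) from rfl,
      ih (pre ++ [x]), map_mul]
    congr 1
    by_cases h : tripSet x = ({i, j, k} : Finset ℕ) <;>
      simp [h, iC3_cons i j k y pre]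

lemma wAux_no_occ (β : List (TIdx n))
    (h : ∀ x ∈ β, tripSet x ≠ ({i, j, k} : Finset ℕ)) :
    ∀ pre, wAux i j k pre β = 1 := by
  induction β with
  | nil => intro pre; rfl
  | cons x t ih =>
    intro pre
    rw [wAux_cons, if_neg (h x (by simp)), one_mul]
    exact ih (fun y hy => h y (by simp [hy])) _

lemma wAux_mirror (B : List (TIdx n))
    (hocc : ∀ x ∈ B, tripSet x ≠ ({i, j, k} : Finset ℕ))
    (hev : ∀ a b c : ℕ, Even (cnt3 B a b c)) :
    ∀ X : List (TIdx n), wAux i j k [] (X ++ B ++ X.reverse) = 1 := by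
  intro X
  induction X with
  | nil => simpa using wAux_no_occ i j k B hocc []
  | cons x t ih =>
    set γ := t ++ B ++ t.reverse with hγ
    have hγev : ∀ a b c : ℕ, Even (cnt3 γ a b c) := by
      intro a b c
      rw [hγ, cnt3_append, cnt3_append, cnt3_reverse]
      obtain ⟨r, hr⟩ := hev a b c
      exact ⟨cnt3 t a b c + r, by omega⟩
    have hword : (x :: t) ++ B ++ (x :: t).reverse = x :: (γ ++ [x]) := by
      simp [hγ, List.append_assoc]
    rw [hword, wAux_cons, show ([] : List (TIdx n)) ++ [x] = [x] from rfl,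
      wAux_shift, wAux_append, ih, one_mul, wAux_cons, wAux_nil, mul_one]
    simp only [List.nil_append]
    by_cases hx : tripSet x = ({i, j, k} : Finset ℕ)
    · rw [if_pos hx, if_pos hx, sh_of]
      have hne : ∀ a : ℕ, a ∉ ({i, j, k} : Finset ℕ) →
          ∀ b c : ℕ, a ∈ ({b, c, a} : Finset ℕ) → Even (cnt3 [x] b c a) := by
        intro a ha b c hmem
        rw [cnt3_single]
        have hne2 : tripSet x ≠ ({b, c, a} : Finset ℕ) := by
          intro hEq
          exact ha ((hEq.symm.trans hx) ▸ hmem)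
        rw [if_neg hne2]
        exact Even.zero
      have key : (fun l => iC3 i j k γ l + iC3 i j k [x] l) =
          iC3 i j k ([] : List (TIdx n)) := by
        rw [← iC3_cons]
        apply iC3_eq_zero
        intro l
        obtain ⟨-, hli, hlj, hlk⟩ := l.2
        have hnotin : l.1 ∉ ({i, j, k} : Finset ℕ) := by simp [hli, hlj, hlk]
        refine ⟨?_, ?_, ?_⟩ <;>
          · rw [cnt3_cons]
            exact Even.add (hne l.1 hnotin _ _ (by simp)) (hγev _ _ _)
      rw [key]
      exact fp2_sq _
    · rw [if_neg hx, if_neg hx, map_one, one_mul]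

lemma w3_eq_wAux (β : List (TIdx n)) : w3 i j k β = wAux i j k [] β := by
  have main : ∀ (t : List (TIdx n)) (s : ℕ) (pre full : List (TIdx n)),
      (∀ idx, full.take (s + idx) = pre ++ t.take idx) →
      ((((t.zipIdx s).map Prod.swap).filter
          (fun x => decide (tripSet x.2 = ({i, j, k} : Finset ℕ)))).map
        (fun x => (PresentedGroup.of (iC3 i j k (full.take x.1)) : F3 n i j k))).prod
        = wAux i j k pre t := by
    intro t
    induction t with
    | nil => intro s pre full h; rfl
    | cons x t ih =>
      intro s pre full h
      have h0 : full.take s = pre := by simpa using h 0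
      have ht : ∀ idx, full.take (s + 1 + idx) = (pre ++ [x]) ++ t.take idx := by
        intro idx
        have h' := h (idx + 1)
        rw [show s + (idx + 1) = s + 1 + idx by omega] at h'
        rw [h', List.take_succ_cons, List.append_assoc]
        rfl
      rw [show ((x :: t).zipIdx s).map Prod.swap = (s, x) :: (t.zipIdx (s + 1)).map Prod.swap from rfl,
        List.filter_cons, wAux_cons, ← ih (s + 1) (pre ++ [x]) full ht, ← h0]
      by_cases hx : tripSet x = ({i, j, k} : Finset ℕ)
      · rw [if_pos (by simpa using hx), if_pos hx, List.map_cons, List.prod_cons]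
      · rw [if_neg (by simpa using hx), if_neg hx, one_mul]
  exact main β 0 [] β (fun idx => by simp)

end W3aux

lemma mem_cWord_tripSet {n l m : ℕ} (x : TIdx n) (hx : x ∈ cWord n l m) :
    l ∈ tripSet x ∧ m ∈ tripSet x := by
  have hex : ∃ c, tripMkS n l m c = some x := by
    rcases List.mem_append.mp hx with h | h <;>
      · obtain ⟨c, -, hc⟩ := List.mem_filterMap.mp h; exact ⟨c, hc⟩
  obtain ⟨c, hc⟩ := hex
  unfold tripMkS at hc
  split at hc
  · cases hc
    constructor <;>
      · show _ ∈ ({(sort3 l m c).1, (sort3 l m c).2.1, (sort3 l m c).2.2} : Finset ℕ)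
        simp only [sort3, Finset.mem_insert, Finset.mem_singleton]
        omega
  · cases hc

lemma flatten_rev (n l : ℕ) (L : List ℕ) :
    ((L.map fun m' => (cWord n l m').reverse).flatten).reverse =
      (L.reverse.map fun m' => cWord n l m').flatten := by
  rw [List.reverse_flatten, List.map_map, ← List.map_reverse]
  simp only [Function.comp_def, List.reverse_reverse]

theorem statement_8 (n i j k l m : ℕ) (hn : 4 ≤ n)
    (hi : 1 ≤ i ∧ i ≤ n) (hj : 1 ≤ j ∧ j ≤ n) (hk : 1 ≤ k ∧ k ≤ n)
    (hij : i ≠ j) (hik : i ≠ k) (hjk : j ≠ k)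
    (hl : 1 ≤ l) (hlm : l < m) (hm : m ≤ n)
    (hcap : ((({l, m} : Finset ℕ)) ∩ (({i, j, k} : Finset ℕ))).card < 2) :
    good3 (phiWord n l m) ∧ w3 i j k (phiWord n l m) = 1 := by
  have hocc : ∀ x ∈ cWord n l m, tripSet x ≠ ({i, j, k} : Finset ℕ) := by
    intro x hx heq
    obtain ⟨h1, h2⟩ := mem_cWord_tripSet x hx
    rw [heq] at h1 h2
    have hsub : ({l, m} : Finset ℕ) ⊆ {i, j, k} := by
      intro y hy
      simp only [Finset.mem_insert, Finset.mem_singleton] at hy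
      rcases hy with rfl | rfl <;> assumption
    rw [Finset.inter_eq_left.mpr hsub, Finset.card_pair (Nat.ne_of_lt hlm)] at hcap
    omega
  have hphi : phiWord n l m =
      ((List.range' (l + 1) (m - 1 - l)).map fun m' => (cWord n l m').reverse).flatten
      ++ (cWord n l m ++ cWord n l m)
      ++ (((List.range' (l + 1) (m - 1 - l)).map fun m' =>
            (cWord n l m').reverse).flatten).reverse := by
    rw [phiWord, ← flatten_rev]
    simp [List.append_assoc]
  constructor
  · intro a
    rw [hphi]
    simp only [List.count_append, List.count_reverse]
    exact ⟨(List.count a ((List.range' (l + 1) (m - 1 - l)).map fun m' =>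
        (cWord n l m').reverse).flatten) + List.count a (cWord n l m), by ring⟩
  · rw [hphi, w3_eq_wAux]
    apply wAux_mirror
    · intro x hxm
      rcases List.mem_append.mp hxm with h | h <;> exact hocc x h
    · intro a b c
      rw [cnt3_append]
      exact ⟨_, rfl⟩

end GnkBrunnian
end

section
/- Fix n ≥ 3 and l ∈ {1,…,n+1}. If β and β′ are good-condition words in the generators of G_{n+1}^2 representing the same element of G_{n+1}^2, then ψ_l(β) = ψ_l(β′) in G_{n,p}^2. In other words, ψ_l is a well-defined map from the subgroup of good-condition elements of G_{n+1}^2 to G_{n,p}^2. -/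
namespace GnkBrunnian

/-! ### Auxiliary development for statement_11 -/

section Psi11

lemma zmod2_add_self (x : ZMod 2) : x + x = 0 := by
  have : ∀ y : ZMod 2, y + y = 0 := by decide
  exact this x

lemma relsP2_eq_one {n : ℕ} {r : FreeGroup (PPIdx n)} (hr : r ∈ relsP2 n) :
    (PresentedGroup.mk (relsP2 n) r : GP2 n) = 1 :=
  (QuotientGroup.eq_one_iff r).2 (Subgroup.subset_normalClosure hr)

/-- The generator `a_{ab}^e` of `GP2 n` (trivial if out of range). -/
def gpOf (n a b : ℕ) (e : ZMod 2) : GP2 n := PresentedGroup.mk (relsP2 n) (fgenP2 n a b e)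

lemma mk_fgenP2 {n a b : ℕ} {e : ZMod 2} :
    (PresentedGroup.mk (relsP2 n)) (fgenP2 n a b e) = gpOf n a b e := rfl

lemma sort2_comm (a b : ℕ) : sort2 a b = sort2 b a := by
  unfold sort2; rw [min_comm, max_comm]

lemma gpOf_symm (n a b : ℕ) (e : ZMod 2) : gpOf n a b e = gpOf n b a e := by
  unfold gpOf fgenP2; rw [sort2_comm]

lemma sort2_eq_of_lt {a b : ℕ} (h : a < b) : sort2 a b = (a, b) := by
  unfold sort2; rw [min_eq_left h.le, max_eq_right h.le]

lemma P2ok_sort2 {n a b : ℕ} (hab : a ≠ b) (ha1 : 1 ≤ a) (han : a ≤ n)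
    (hb1 : 1 ≤ b) (hbn : b ≤ n) : P2ok n (sort2 a b) := by
  unfold sort2 P2ok
  refine ⟨le_min ha1 hb1, ?_, max_le han hbn⟩
  rcases lt_or_gt_of_ne hab with h | h
  · rw [min_eq_left h.le, max_eq_right h.le]; exact h
  · rw [min_eq_right h.le, max_eq_left h.le]; exact h

lemma gpOf_eq_of {n a b : ℕ} (h : P2ok n (sort2 a b)) (e : ZMod 2) :
    gpOf n a b e = PresentedGroup.of (⟨sort2 a b, h⟩, e) := by
  unfold gpOf fgenP2; rw [dif_pos h]; rfl

lemma ppof_sq {n : ℕ} (x : PPIdx n) :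
    (PresentedGroup.of x : GP2 n) * PresentedGroup.of x = 1 := by
  have h := relsP2_eq_one (n := n) (r := .of x * .of x) (Or.inl (Or.inl ⟨x, rfl⟩))
  rwa [map_mul] at h

lemma gpOf_sq (n a b : ℕ) (e : ZMod 2) : gpOf n a b e * gpOf n a b e = 1 := by
  unfold gpOf fgenP2
  split
  · exact ppof_sq _
  · simp

lemma gpOf_comm {n i j k m : ℕ} (e e' : ZMod 2)
    (hi1 : 1 ≤ i) (hin : i ≤ n) (hj1 : 1 ≤ j) (hjn : j ≤ n)
    (hk1 : 1 ≤ k) (hkn : k ≤ n) (hm1 : 1 ≤ m) (hmn : m ≤ n)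
    (hij : i ≠ j) (hik : i ≠ k) (him : i ≠ m) (hjk : j ≠ k) (hjm : j ≠ m) (hkm : k ≠ m) :
    gpOf n i j e * gpOf n k m e' = gpOf n k m e' * gpOf n i j e := by
  have h := relsP2_eq_one (n := n)
    (r := fgenP2 n i j e * fgenP2 n k m e' * (fgenP2 n i j e)⁻¹ * (fgenP2 n k m e')⁻¹)
    (Or.inl (Or.inr ⟨i, j, k, m, e, e', hi1, hin, hj1, hjn, hk1, hkn, hm1, hmn,
      hij, hik, him, hjk, hjm, hkm, rfl⟩))
  simp only [map_mul, map_inv, mk_fgenP2] at h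
  exact commutatorElement_eq_one_iff_mul_comm.1 h

lemma gpOf_tri {n i j k : ℕ} (e1 e2 e3 : ZMod 2)
    (hi1 : 1 ≤ i) (hij : i < j) (hjk : j < k) (hkn : k ≤ n) (he : e1 + e2 + e3 = 0) :
    gpOf n i j e1 * (gpOf n i k e2 * gpOf n j k e3)
      = gpOf n j k e3 * (gpOf n i k e2 * gpOf n i j e1) := by
  have h := relsP2_eq_one (n := n)
    (r := fgenP2 n i j e1 * fgenP2 n i k e2 * fgenP2 n j k e3 *
      (fgenP2 n j k e3 * fgenP2 n i k e2 * fgenP2 n i j e1)⁻¹)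
    (Or.inr ⟨i, j, k, e1, e2, e3, hi1, hij, hjk, hkn, he, rfl⟩)
  simp only [map_mul, map_inv, mul_inv_eq_one, mk_fgenP2] at h
  rw [← mul_assoc, h, mul_assoc]

/-- Pure group-theoretic rotation of a triangle relation among involutions. -/
lemma tri_rot {G : Type*} [Group G] {x y z : G}
    (hz : z * z = 1) (h : x * (y * z) = z * (y * x)) :
    y * (x * z) = z * (x * y) := by
  have hz' : ∀ t : G, z * (z * t) = t := fun t => by rw [← mul_assoc, hz, one_mul]
  have h' : ∀ t : G, z * (y * (x * t)) = x * (y * (z * t)) := fun t => by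
    have := congrArg (· * t) h.symm
    simpa [mul_assoc] using this
  calc y * (x * z) = z * (z * (y * (x * z))) := (hz' _).symm
    _ = z * (x * (y * (z * z))) := by rw [h']
    _ = z * (x * y) := by rw [hz, mul_one]

end Psi11
section Psi12

/-- Triangle relation at exponent `0` for an arbitrary ordering of distinct indices. -/
lemma gpOf_tri_any {n a b c : ℕ}
    (ha1 : 1 ≤ a) (hb1 : 1 ≤ b) (hc1 : 1 ≤ c)
    (han : a ≤ n) (hbn : b ≤ n) (hcn : c ≤ n)
    (hab : a ≠ b) (hac : a ≠ c) (hbc : b ≠ c) :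
    gpOf n a b 0 * (gpOf n a c 0 * gpOf n b c 0)
      = gpOf n b c 0 * (gpOf n a c 0 * gpOf n a b 0) := by
  have hz : (0 : ZMod 2) + 0 + 0 = 0 := by decide
  rcases lt_or_gt_of_ne hab with h1 | h1 <;> rcases lt_or_gt_of_ne hac with h2 | h2 <;>
    rcases lt_or_gt_of_ne hbc with h3 | h3
  -- a < b, a < c, b < c : sorted (a,b,c)
  · exact gpOf_tri 0 0 0 ha1 h1 h3 hcn hz
  -- a < b, a < c, b > c : sorted (a,c,b)
  · have B := gpOf_tri (n := n) 0 0 0 ha1 h2 h3 hbn hz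
    have T1 := tri_rot (gpOf_sq n c b 0) B
    rw [gpOf_symm n c b] at T1
    exact T1
  -- a < b, a > c, b < c : contradiction
  · exact absurd (h1.trans h3) (lt_asymm h2)
  -- a < b, a > c : then c < a < b
  · have B := gpOf_tri (n := n) 0 0 0 hc1 h2 h1 hbn hz
    have T1 := tri_rot (gpOf_sq n a b 0) B
    rw [gpOf_symm n c a, gpOf_symm n c b] at T1
    exact T1.symm
  -- a > b, a < c : b < a < c
  · have B := gpOf_tri (n := n) 0 0 0 hb1 h1 h2 hcn hz
    have T1 := tri_rot (gpOf_sq n a c 0) B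
    have R2 := tri_rot (gpOf_sq n b c 0) T1.symm
    rw [gpOf_symm n b a] at R2
    exact R2
  · exact absurd (h2.trans h3) (lt_asymm h1)
  -- a > b, a > c, b < c : b < c < a
  · have B := gpOf_tri (n := n) 0 0 0 hb1 h3 h2 han hz
    have T1 := tri_rot (gpOf_sq n c a 0) B
    have R2 := tri_rot (gpOf_sq n b a 0) T1.symm
    rw [gpOf_symm n b a, gpOf_symm n c a] at R2
    exact R2.symm
  -- c < b < a
  · have B := gpOf_tri (n := n) 0 0 0 hc1 h3 h1 han hz
    rw [gpOf_symm n c b, gpOf_symm n c a, gpOf_symm n b a] at B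
    exact B.symm

/-- The twisting of a generator of `GP2 n` by a parity vector. -/
def twP (n : ℕ) (v : ℕ → ZMod 2) (y : PPIdx n) : PPIdx n :=
  (y.1, y.2 + v y.1.1.1 + v y.1.1.2)

lemma lift_twP_fgenP2 {n : ℕ} (v : ℕ → ZMod 2) (a b : ℕ) (e : ZMod 2) :
    FreeGroup.lift (fun y => (PresentedGroup.of (twP n v y) : GP2 n)) (fgenP2 n a b e)
      = gpOf n a b (e + v a + v b) := by
  unfold fgenP2
  split
  · rename_i h
    rw [FreeGroup.lift_apply_of, gpOf_eq_of h]
    have hv : v (sort2 a b).1 + v (sort2 a b).2 = v a + v b := by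
      unfold sort2
      rcases le_total a b with hab | hab
      · rw [min_eq_left hab, max_eq_right hab]
      · rw [min_eq_right hab, max_eq_left hab, add_comm]
    show (PresentedGroup.of ((⟨sort2 a b, h⟩, e + v (sort2 a b).1 + v (sort2 a b).2) : PPIdx n) : GP2 n)
        = PresentedGroup.of ((⟨sort2 a b, h⟩, e + v a + v b) : PPIdx n)
    rw [add_assoc, hv, ← add_assoc]
  · rename_i h
    rw [map_one]
    unfold gpOf fgenP2
    rw [dif_neg h, map_one]

/-- The twist automorphism of `GP2 n`. -/
def Tw (n : ℕ) (v : ℕ → ZMod 2) : GP2 n →* GP2 n :=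
  PresentedGroup.toGroup (f := fun y => (PresentedGroup.of (twP n v y) : GP2 n)) (by
    intro r hr
    rcases hr with (⟨x, rfl⟩ | ⟨i, j, k, m, e, e', hi1, hin, hj1, hjn, hk1, hkn, hm1, hmn,
        hij, hik, him, hjk, hjm, hkm, rfl⟩) | ⟨i, j, k, e1, e2, e3, hi1, hij, hjk, hkn, he, rfl⟩
    · rw [map_mul, FreeGroup.lift_apply_of]
      exact ppof_sq _
    · simp only [map_mul, map_inv, lift_twP_fgenP2]
      rw [← commutatorElement_def]
      exact commutatorElement_eq_one_iff_mul_comm.2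
        (gpOf_comm _ _ hi1 hin hj1 hjn hk1 hkn hm1 hmn hij hik him hjk hjm hkm)
    · simp only [map_mul, map_inv, lift_twP_fgenP2, mul_inv_eq_one]
      have he' : (e1 + v i + v j) + (e2 + v i + v k) + (e3 + v j + v k) = 0 := by
        have : (e1 + v i + v j) + (e2 + v i + v k) + (e3 + v j + v k)
            = (e1 + e2 + e3) + ((v i + v i) + ((v j + v j) + (v k + v k))) := by ring
        rw [this, he, zmod2_add_self, zmod2_add_self, zmod2_add_self]
        simp
      have := gpOf_tri (n := n) _ _ _ hi1 hij hjk hkn he'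
      simpa [mul_assoc] using this)

lemma Tw_of {n : ℕ} (v : ℕ → ZMod 2) (y : PPIdx n) :
    Tw n v (PresentedGroup.of y) = PresentedGroup.of (twP n v y) :=
  PresentedGroup.toGroup.of _

lemma Tw_gpOf {n : ℕ} (v : ℕ → ZMod 2) (a b : ℕ) (e : ZMod 2) :
    Tw n v (gpOf n a b e) = gpOf n a b (e + v a + v b) := by
  have : Tw n v (gpOf n a b e)
      = FreeGroup.lift (fun y => (PresentedGroup.of (twP n v y) : GP2 n)) (fgenP2 n a b e) := rfl
  rw [this, lift_twP_fgenP2]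

lemma Tw_Tw {n : ℕ} (v w : ℕ → ZMod 2) (x : GP2 n) :
    Tw n v (Tw n w x) = Tw n (v + w) x := by
  have : (Tw n v).comp (Tw n w) = Tw n (v + w) := by
    apply PresentedGroup.ext
    intro y
    simp only [MonoidHom.comp_apply, Tw_of]
    unfold twP
    simp only [Pi.add_apply]
    congr 1
    ring_nf
  exact DFunLike.congr_fun this x

lemma Tw_zero {n : ℕ} (x : GP2 n) : Tw n 0 x = x := by
  have : Tw n 0 = MonoidHom.id (GP2 n) := by
    apply PresentedGroup.ext
    intro y
    simp only [Tw_of, MonoidHom.id_apply]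
    unfold twP
    simp
  rw [this]; rfl

lemma Tw_invol {n : ℕ} (v : ℕ → ZMod 2) (x : GP2 n) : Tw n v (Tw n v x) = x := by
  rw [Tw_Tw]
  have : v + v = 0 := funext fun m => zmod2_add_self (v m)
  rw [this, Tw_zero]

/-- The twist as a `MulEquiv`. -/
def TwE (n : ℕ) (v : ℕ → ZMod 2) : GP2 n ≃* GP2 n :=
  { toFun := Tw n v, invFun := Tw n v, left_inv := Tw_invol v, right_inv := Tw_invol v,
    map_mul' := map_mul _ }

/-- The action of parity vectors on `GP2 n`. -/
def TwAut (n : ℕ) : Multiplicative (ℕ → ZMod 2) →* MulAut (GP2 n) where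
  toFun v := TwE n (Multiplicative.toAdd v)
  map_one' := by
    apply MulEquiv.ext
    intro x
    exact Tw_zero x
  map_mul' v w := by
    apply MulEquiv.ext
    intro x
    exact (Tw_Tw _ _ x).symm

/-- The target semidirect product. -/
abbrev SD (n : ℕ) := SemidirectProduct (GP2 n) (Multiplicative (ℕ → ZMod 2)) (TwAut n)

lemma TwAut_gpOf {n : ℕ} (v : ℕ → ZMod 2) (a b : ℕ) (e : ZMod 2) :
    TwAut n (Multiplicative.ofAdd v) (gpOf n a b e) = gpOf n a b (e + v a + v b) :=
  Tw_gpOf v a b e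

lemma inr_inl_swap {n : ℕ} (w : Multiplicative (ℕ → ZMod 2)) (g : GP2 n) :
    (SemidirectProduct.inr w : SD n) * SemidirectProduct.inl g
      = SemidirectProduct.inl (TwAut n w g) * SemidirectProduct.inr w := by
  rw [SemidirectProduct.inl_aut]
  simp [mul_assoc]

end Psi12
section Psi13

lemma del_ne {l x y : ℕ} (hx : x ≠ l) (hy : y ≠ l) (hxy : x ≠ y) : del l x ≠ del l y := by
  unfold del; split <;> split <;> omega

lemma del_pos {l x : ℕ} (hl1 : 1 ≤ l) (hx : 1 ≤ x) (hxl : x ≠ l) : 1 ≤ del l x := by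
  unfold del; split <;> omega

lemma del_le {n l x : ℕ} (hl2 : l ≤ n + 1) (hx : x ≤ n + 1) (hxl : x ≠ l) : del l x ≤ n := by
  unfold del; split <;> omega

/-- indicator vector -/
def eV (m : ℕ) : ℕ → ZMod 2 := fun x => if x = m then 1 else 0

lemma eV_self (m : ℕ) : eV m m = 1 := if_pos rfl

lemma eV_ne {m x : ℕ} (h : x ≠ m) : eV m x = 0 := if_neg h

lemma ofAdd_sq (v : ℕ → ZMod 2) :
    Multiplicative.ofAdd v * Multiplicative.ofAdd v = 1 := by
  rw [← ofAdd_add]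
  have : v + v = 0 := funext fun m => zmod2_add_self (v m)
  rw [this]; rfl

/-- The image of the generator `a_{ab}` of `G_{n+1}^2` in the semidirect product. -/
noncomputable def fval (n l a b : ℕ) : SD n :=
  if l = a ∨ l = b then
    SemidirectProduct.inr (Multiplicative.ofAdd (eV (del l (if l = a then b else a))))
  else SemidirectProduct.inl (gpOf n (del l a) (del l b) 0)

lemma fval_symm {n l a b : ℕ} (hab : a ≠ b) : fval n l a b = fval n l b a := by
  unfold fval
  by_cases h1 : l = a <;> by_cases h2 : l = b
  · exact absurd (h1.symm.trans h2) hab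
  · simp [h1, h2, hab, Ne.symm hab]
  · simp [h1, h2, hab, Ne.symm hab]
  · rw [if_neg (by tauto : ¬(l = a ∨ l = b)), if_neg (by tauto : ¬(l = b ∨ l = a)), gpOf_symm]

noncomputable def fH (n l : ℕ) : PIdx (n + 1) → SD n := fun p => fval n l p.1.1 p.1.2

lemma lift_fH {n l : ℕ} (a b : ℕ) (hab : a ≠ b) (ha1 : 1 ≤ a) (han : a ≤ n + 1)
    (hb1 : 1 ≤ b) (hbn : b ≤ n + 1) :
    FreeGroup.lift (fH n l) (fgen2 (n + 1) a b) = fval n l a b := by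
  have hok := P2ok_sort2 hab ha1 han hb1 hbn
  unfold fgen2
  rw [dif_pos hok, FreeGroup.lift_apply_of]
  show fval n l (sort2 a b).1 (sort2 a b).2 = fval n l a b
  rcases lt_or_gt_of_ne hab with h | h
  · rw [sort2_eq_of_lt h]
  · rw [sort2_comm, sort2_eq_of_lt h]
    exact fval_symm (Ne.symm hab)

lemma fval_sq {n l a b : ℕ} : fval n l a b * fval n l a b = 1 := by
  unfold fval
  split
  · rw [← map_mul, ofAdd_sq, map_one]
  · rw [← map_mul, gpOf_sq, map_one]

lemma inr_v_inl {n : ℕ} (v : ℕ → ZMod 2) (a b : ℕ) (e : ZMod 2) :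
    SemidirectProduct.inr (Multiplicative.ofAdd v) * (SemidirectProduct.inl (gpOf n a b e) : SD n)
      = SemidirectProduct.inl (gpOf n a b (e + v a + v b)) *
        SemidirectProduct.inr (Multiplicative.ofAdd v) := by
  rw [inr_inl_swap, TwAut_gpOf]

lemma inr_comm {n : ℕ} (x y : Multiplicative (ℕ → ZMod 2)) :
    (SemidirectProduct.inr x : SD n) * SemidirectProduct.inr y
      = SemidirectProduct.inr y * SemidirectProduct.inr x := by
  rw [← map_mul, mul_comm, map_mul]

lemma fval_comm {n l : ℕ} (hl1 : 1 ≤ l) (hl2 : l ≤ n + 1) {i j k m : ℕ}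
    (hi1 : 1 ≤ i) (hin : i ≤ n + 1) (hj1 : 1 ≤ j) (hjn : j ≤ n + 1)
    (hk1 : 1 ≤ k) (hkn : k ≤ n + 1) (hm1 : 1 ≤ m) (hmn : m ≤ n + 1)
    (hij : i ≠ j) (hik : i ≠ k) (him : i ≠ m) (hjk : j ≠ k) (hjm : j ≠ m) (hkm : k ≠ m) :
    fval n l i j * fval n l k m = fval n l k m * fval n l i j := by
  have key : ∀ m0 a b : ℕ, m0 ≠ l → a ≠ l → b ≠ l → m0 ≠ a → m0 ≠ b →
      SemidirectProduct.inr (Multiplicative.ofAdd (eV (del l m0))) *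
        (SemidirectProduct.inl (gpOf n (del l a) (del l b) 0) : SD n)
      = SemidirectProduct.inl (gpOf n (del l a) (del l b) 0) *
        SemidirectProduct.inr (Multiplicative.ofAdd (eV (del l m0))) := by
    intro m0 a b h1 h2 h3 h4 h5
    rw [inr_v_inl, eV_ne (del_ne h2 h1 fun hh => h4 hh.symm),
      eV_ne (del_ne h3 h1 fun hh => h5 hh.symm), add_zero, add_zero]
  unfold fval
  by_cases c1 : l = i ∨ l = j <;> by_cases c2 : l = k ∨ l = m
  · rw [if_pos c1, if_pos c2]
    exact inr_comm _ _
  · rw [if_pos c1, if_neg c2]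
    push_neg at c2
    rcases c1 with h | h
    · rw [if_pos h]
      exact key j k m (by omega) (Ne.symm c2.1) (Ne.symm c2.2) hjk hjm
    · rw [if_neg (by omega : ¬ l = i)]
      exact key i k m (by omega) (Ne.symm c2.1) (Ne.symm c2.2) hik him
  · rw [if_neg c1, if_pos c2]
    push_neg at c1
    rcases c2 with h | h
    · rw [if_pos h]
      exact (key m i j (by omega) (Ne.symm c1.1) (Ne.symm c1.2)
        (Ne.symm him) (Ne.symm hjm)).symm
    · rw [if_neg (by omega : ¬ l = k)]
      exact (key k i j (by omega) (Ne.symm c1.1) (Ne.symm c1.2)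
        (Ne.symm hik) (Ne.symm hjk)).symm
  · rw [if_neg c1, if_neg c2, ← map_mul, ← map_mul]
    push_neg at c1 c2
    congr 1
    exact gpOf_comm 0 0 (del_pos hl1 hi1 (Ne.symm c1.1)) (del_le hl2 hin (Ne.symm c1.1))
      (del_pos hl1 hj1 (Ne.symm c1.2)) (del_le hl2 hjn (Ne.symm c1.2))
      (del_pos hl1 hk1 (Ne.symm c2.1)) (del_le hl2 hkn (Ne.symm c2.1))
      (del_pos hl1 hm1 (Ne.symm c2.2)) (del_le hl2 hmn (Ne.symm c2.2))
      (del_ne (Ne.symm c1.1) (Ne.symm c1.2) hij)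
      (del_ne (Ne.symm c1.1) (Ne.symm c2.1) hik)
      (del_ne (Ne.symm c1.1) (Ne.symm c2.2) him)
      (del_ne (Ne.symm c1.2) (Ne.symm c2.1) hjk)
      (del_ne (Ne.symm c1.2) (Ne.symm c2.2) hjm)
      (del_ne (Ne.symm c2.1) (Ne.symm c2.2) hkm)

end Psi13
section Psi14

lemma fval_tri {n l : ℕ} (hl1 : 1 ≤ l) (hl2 : l ≤ n + 1) {i j k : ℕ}
    (hi1 : 1 ≤ i) (hin : i ≤ n + 1) (hj1 : 1 ≤ j) (hjn : j ≤ n + 1)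
    (hk1 : 1 ≤ k) (hkn : k ≤ n + 1)
    (hij : i ≠ j) (hik : i ≠ k) (hjk : j ≠ k) :
    fval n l i j * (fval n l i k * fval n l j k)
      = fval n l j k * (fval n l i k * fval n l i j) := by
  have d1 : (0 : ZMod 2) + 0 + 1 = 1 := by decide
  have d2 : (1 : ZMod 2) + 1 + 0 = 0 := by decide
  have d3 : (0 : ZMod 2) + 1 + 0 = 1 := by decide
  have d4 : (1 : ZMod 2) + 0 + 1 = 0 := by decide
  unfold fval
  by_cases hi : l = i
  · rw [if_pos (Or.inl hi), if_pos (Or.inl hi), if_neg (by omega : ¬(l = j ∨ l = k)),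
      if_pos hi, if_pos hi]
    rw [inr_v_inl, eV_ne (del_ne (by omega) (by omega) hjk), eV_self, d1,
      ← mul_assoc, inr_v_inl, eV_self, eV_ne (del_ne (by omega) (by omega) (Ne.symm hjk)), d2,
      mul_assoc, inr_comm]
  · by_cases hj : l = j
    · rw [if_pos (Or.inr hj), if_pos (Or.inl hj), if_neg (by omega : ¬(l = i ∨ l = k)),
        if_neg hi, if_pos hj]
      rw [← mul_assoc, ← mul_assoc, inr_v_inl, inr_v_inl,
        eV_self, eV_ne (del_ne (by omega) (by omega) (Ne.symm hik)), d3,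
        eV_ne (del_ne (by omega) (by omega) hik), eV_self, d1,
        mul_assoc, mul_assoc, inr_comm]
    · by_cases hk : l = k
      · rw [if_pos (Or.inr hk), if_pos (Or.inr hk), if_neg (by omega : ¬(l = i ∨ l = j)),
          if_neg hi, if_neg hj]
        conv_rhs => rw [inr_v_inl, eV_self, eV_ne (del_ne (by omega) (by omega) (Ne.symm hij)), d3,
          ← mul_assoc, inr_v_inl, eV_ne (del_ne (by omega) (by omega) hij), eV_self, d4]
        rw [mul_assoc, inr_comm]
      · rw [if_neg (by omega : ¬(l = i ∨ l = j)), if_neg (by omega : ¬(l = i ∨ l = k)),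
          if_neg (by omega : ¬(l = j ∨ l = k)), ← map_mul, ← map_mul, ← map_mul, ← map_mul]
        congr 1
        exact gpOf_tri_any (del_pos hl1 hi1 (by omega)) (del_pos hl1 hj1 (by omega))
          (del_pos hl1 hk1 (by omega)) (del_le hl2 hin (by omega)) (del_le hl2 hjn (by omega))
          (del_le hl2 hkn (by omega)) (del_ne (by omega) (by omega) hij)
          (del_ne (by omega) (by omega) hik) (del_ne (by omega) (by omega) hjk)

/-- The homomorphism `G_{n+1}^2 → GP2 n ⋊ (ℤ/2)^ℕ`. -/
noncomputable def Psi (n l : ℕ) (hl1 : 1 ≤ l) (hl2 : l ≤ n + 1) : G2 (n + 1) →* SD n :=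
  PresentedGroup.toGroup (f := fH n l) (by
    intro r hr
    rcases hr with (⟨x, rfl⟩ | ⟨i, j, k, m, hi1, hin, hj1, hjn, hk1, hkn, hm1, hmn,
        hij, hik, him, hjk, hjm, hkm, rfl⟩) |
      ⟨i, j, k, hi1, hin, hj1, hjn, hk1, hkn, hij, hik, hjk, rfl⟩
    · simp only [map_mul, FreeGroup.lift_apply_of]
      exact fval_sq
    · have hA := lift_fH (n := n) (l := l) i j hij hi1 hin hj1 hjn
      have hB := lift_fH (n := n) (l := l) k m hkm hk1 hkn hm1 hmn
      simp only [map_mul, map_inv, hA, hB]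
      rw [← commutatorElement_def]
      exact commutatorElement_eq_one_iff_mul_comm.2
        (fval_comm hl1 hl2 hi1 hin hj1 hjn hk1 hkn hm1 hmn hij hik him hjk hjm hkm)
    · have hA := lift_fH (n := n) (l := l) i j hij hi1 hin hj1 hjn
      have hB := lift_fH (n := n) (l := l) i k hik hi1 hin hk1 hkn
      have hC := lift_fH (n := n) (l := l) j k hjk hj1 hjn hk1 hkn
      simp only [map_mul, map_inv, hA, hB, hC]
      rw [mul_inv_eq_one]
      have := fval_tri hl1 hl2 hi1 hin hj1 hjn hk1 hkn hij hik hjk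
      simpa [mul_assoc] using this)

lemma Psi_of {n l : ℕ} (hl1 : 1 ≤ l) (hl2 : l ≤ n + 1) (x : PIdx (n + 1)) :
    Psi n l hl1 hl2 (PresentedGroup.of x) = fval n l x.1.1 x.1.2 :=
  PresentedGroup.toGroup.of _

end Psi14
section Psi15

lemma toGP2_cons {n : ℕ} (a : PPIdx n) (w : List (PPIdx n)) :
    toGP2 (a :: w) = PresentedGroup.of a * toGP2 w := by
  simp [toGP2]

lemma toGP2_map_twP {n : ℕ} (v : ℕ → ZMod 2) (w : List (PPIdx n)) :
    toGP2 (w.map (twP n v)) = Tw n v (toGP2 w) := by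
  induction w with
  | nil => simp [toGP2]
  | cons a w ih => rw [List.map_cons, toGP2_cons, toGP2_cons, map_mul, ih, Tw_of]

lemma cnt2_cons {n : ℕ} (x : PIdx n) (β : List (PIdx n)) (a b : ℕ) :
    cnt2 (x :: β) a b = (if pairSet x = ({a, b} : Finset ℕ) then 1 else 0) + cnt2 β a b := by
  unfold cnt2
  rw [List.filter_cons]
  by_cases h : pairSet x = ({a, b} : Finset ℕ)
  · rw [if_pos (by simp [h]), if_pos h, List.length_cons]
    omega
  · rw [if_neg (by simp [h]), if_neg h, zero_add]

lemma pairSet_eq_iff {n : ℕ} (x : PIdx n) (a b : ℕ) :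
    pairSet x = ({a, b} : Finset ℕ) ↔ (x.1.1 = a ∧ x.1.2 = b) ∨ (x.1.1 = b ∧ x.1.2 = a) := by
  unfold pairSet
  constructor
  · intro h
    have h1 : x.1.1 ∈ ({a, b} : Finset ℕ) := by rw [← h]; simp
    have h2 : x.1.2 ∈ ({a, b} : Finset ℕ) := by rw [← h]; simp
    have h3 : a ∈ ({x.1.1, x.1.2} : Finset ℕ) := by rw [h]; simp
    have h4 : b ∈ ({x.1.1, x.1.2} : Finset ℕ) := by rw [h]; simp
    simp only [Finset.mem_insert, Finset.mem_singleton] at h1 h2 h3 h4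
    omega
  · rintro (⟨h1, h2⟩ | ⟨h1, h2⟩)
    · rw [h1, h2]
    · rw [h1, h2]; exact Finset.pair_comm _ _

/-- The parity vector contributed by the letter `a_{ab}` of `G_{n+1}^2`. -/
def vA (l a b : ℕ) : ℕ → ZMod 2 :=
  if l = a then eV (del l b) else if l = b then eV (del l a) else 0

lemma cnt_delta {n l : ℕ} (a : PIdx (n + 1)) (i0 : ℕ) (hi0 : i0 ≠ l) :
    ((if pairSet a = ({i0, l} : Finset ℕ) then 1 else 0 : ℕ) : ZMod 2)
      = vA l a.1.1 a.1.2 (del l i0) := by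
  have h12 : a.1.1 < a.1.2 := a.2.2.1
  unfold vA
  by_cases h1 : l = a.1.1
  · rw [if_pos h1]
    by_cases h2 : a.1.2 = i0
    · rw [if_pos ((pairSet_eq_iff a i0 l).2 (Or.inr ⟨h1.symm, h2⟩)), h2, eV_self]
      norm_num
    · rw [if_neg, eV_ne (del_ne hi0 (by omega) fun hh => h2 hh.symm)]
      · norm_num
      · intro hc
        rcases (pairSet_eq_iff a i0 l).1 hc with ⟨_, hc2⟩ | ⟨_, hc2⟩ <;> omega
  · by_cases h2 : l = a.1.2
    · rw [if_neg h1, if_pos h2]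
      by_cases h3 : a.1.1 = i0
      · rw [if_pos ((pairSet_eq_iff a i0 l).2 (Or.inl ⟨h3, h2.symm⟩)), h3, eV_self]
        norm_num
      · rw [if_neg, eV_ne (del_ne hi0 (by omega) fun hh => h3 hh.symm)]
        · norm_num
        · intro hc
          rcases (pairSet_eq_iff a i0 l).1 hc with ⟨hc1, _⟩ | ⟨_, hc2⟩ <;> omega
    · rw [if_neg h1, if_neg h2, if_neg]
      · simp
      · intro hc
        rcases (pairSet_eq_iff a i0 l).1 hc with ⟨_, hc2⟩ | ⟨hc1, _⟩ <;> omega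

lemma v_minmax (v : ℕ → ZMod 2) (x y : ℕ) (e : ZMod 2) :
    e + v (min x y) + v (max x y) = e + v x + v y := by
  rcases le_total x y with h | h
  · rw [min_eq_left h, max_eq_right h]
  · rw [min_eq_right h, max_eq_left h, add_assoc, add_comm (v y), ← add_assoc]

lemma eps_cons {n l : ℕ} (a : PIdx (n + 1)) (pre : List (PIdx (n + 1))) (i0 j0 : ℕ)
    (hi0 : i0 ≠ l) (hj0 : j0 ≠ l) :
    ((cnt2 (a :: pre) i0 l + cnt2 (a :: pre) j0 l : ℕ) : ZMod 2)
      = ((cnt2 pre i0 l + cnt2 pre j0 l : ℕ) : ZMod 2)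
        + vA l a.1.1 a.1.2 (del l i0) + vA l a.1.1 a.1.2 (del l j0) := by
  rw [cnt2_cons, cnt2_cons, ← cnt_delta a i0 hi0, ← cnt_delta a j0 hj0]
  push_cast
  ring

lemma psiWord_nil {n l : ℕ} : psiWord n l [] = [] := rfl

/-- The filterMap function defining `psiWord`. -/
def Fpsi (n l : ℕ) (γ : List (PIdx (n + 1))) : ℕ × PIdx (n + 1) → Option (PPIdx n) := fun x =>
  if l = x.2.1.1 ∨ l = x.2.1.2 then none
  else (pairMkS n (del l x.2.1.1) (del l x.2.1.2)).map fun p =>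
    (p, ((cnt2 (γ.take x.1) x.2.1.1 l + cnt2 (γ.take x.1) x.2.1.2 l : ℕ) : ZMod 2))

lemma psiWord_eq_filterMap {n l : ℕ} (γ : List (PIdx (n + 1))) :
    psiWord n l γ = (γ.zipIdx.map Prod.swap).filterMap (Fpsi n l γ) := rfl

lemma zipIdx_swap_cons {α : Type*} (a : α) (β : List α) :
    ((a :: β).zipIdx.map Prod.swap)
      = (0, a) :: (β.zipIdx.map Prod.swap).map (Prod.map (· + 1) id) := by
  rw [List.zipIdx_cons', List.map_cons, List.map_map, List.map_map]; rfl

lemma psiWord_cons {n l : ℕ} (a : PIdx (n + 1)) (β : List (PIdx (n + 1))) :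
    psiWord n l (a :: β)
      = (if l = a.1.1 ∨ l = a.1.2 then ([] : List (PPIdx n))
          else ((pairMkS n (del l a.1.1) (del l a.1.2)).map fun p => (p, (0 : ZMod 2))).toList)
        ++ (psiWord n l β).map (twP n (vA l a.1.1 a.1.2)) := by
  have tail : (β.zipIdx.map Prod.swap).filterMap (Fpsi n l (a :: β) ∘ Prod.map (· + 1) id)
      = (psiWord n l β).map (twP n (vA l a.1.1 a.1.2)) := by
    rw [psiWord_eq_filterMap, List.map_filterMap]
    congr 1
    funext x
    show Fpsi n l (a :: β) (x.1 + 1, x.2) = (Fpsi n l β x).map (twP n (vA l a.1.1 a.1.2))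
    unfold Fpsi
    by_cases c : l = x.2.1.1 ∨ l = x.2.1.2
    · rw [if_pos c, if_pos c]; rfl
    · rw [if_neg c, if_neg c]
      push_neg at c
      unfold pairMkS
      split
      · rw [Option.map_some, Option.map_some, Option.map_some]
        congr 1
        unfold twP
        refine Prod.ext rfl ?_
        show ((cnt2 ((a :: β).take (x.1 + 1)) x.2.1.1 l
              + cnt2 ((a :: β).take (x.1 + 1)) x.2.1.2 l : ℕ) : ZMod 2)
            = ((cnt2 (β.take x.1) x.2.1.1 l + cnt2 (β.take x.1) x.2.1.2 l : ℕ) : ZMod 2)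
              + vA l a.1.1 a.1.2 (min (del l x.2.1.1) (del l x.2.1.2))
              + vA l a.1.1 a.1.2 (max (del l x.2.1.1) (del l x.2.1.2))
        rw [v_minmax, List.take_succ_cons]
        exact eps_cons a (β.take x.1) _ _ (Ne.symm c.1) (Ne.symm c.2)
      · rfl
  rw [psiWord_eq_filterMap, zipIdx_swap_cons]
  by_cases c : l = a.1.1 ∨ l = a.1.2
  · rw [if_pos c]
    rw [List.filterMap_cons_none (by unfold Fpsi; rw [if_pos c]),
      List.filterMap_map, List.nil_append]
    exact tail
  · rw [if_neg c]
    rcases hp : pairMkS n (del l a.1.1) (del l a.1.2) with _ | p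
    · rw [List.filterMap_cons_none (by unfold Fpsi; rw [if_neg c, hp]; rfl),
        List.filterMap_map]
      rw [show ((none : Option (PIdx n)).map fun p => (p, (0 : ZMod 2))).toList = [] from rfl,
        List.nil_append]
      exact tail
    · have hsome : Fpsi n l (a :: β) (0, a) = some (p, (0 : ZMod 2)) := by
        unfold Fpsi
        rw [if_neg c, hp, Option.map_some]
        simp [cnt2]
      rw [List.filterMap_cons_some hsome, List.filterMap_map]
      rw [show ((some p).map fun q => (q, (0 : ZMod 2))).toList = [(p, (0 : ZMod 2))] from rfl]
      rw [List.singleton_append, tail]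

end Psi15
section Psi16

lemma TwAut_ofAdd {n : ℕ} (v : ℕ → ZMod 2) (g : GP2 n) :
    TwAut n (Multiplicative.ofAdd v) g = Tw n v g := rfl

lemma inr_ofAdd_mul {n : ℕ} (v w : ℕ → ZMod 2) :
    (SemidirectProduct.inr (Multiplicative.ofAdd v) : SD n) *
      SemidirectProduct.inr (Multiplicative.ofAdd w)
    = SemidirectProduct.inr (Multiplicative.ofAdd (v + w)) := by
  rw [ofAdd_add, map_mul]

lemma inl_mul {n : ℕ} (g g' : GP2 n) :
    (SemidirectProduct.inl g : SD n) * SemidirectProduct.inl g'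
      = SemidirectProduct.inl (g * g') := (map_mul _ _ _).symm

/-- Total parity vector of a word. -/
def vW (l : ℕ) {n : ℕ} (β : List (PIdx (n + 1))) : ℕ → ZMod 2 :=
  (β.map fun a => vA l a.1.1 a.1.2).sum

lemma vW_nil {n l : ℕ} : vW l ([] : List (PIdx (n + 1))) = 0 := rfl

lemma vW_cons {n l : ℕ} (a : PIdx (n + 1)) (β : List (PIdx (n + 1))) :
    vW l (a :: β) = vA l a.1.1 a.1.2 + vW l β := by
  simp [vW]

lemma Psi_eval {n l : ℕ} (hl1 : 1 ≤ l) (hl2 : l ≤ n + 1) (β : List (PIdx (n + 1))) :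
    Psi n l hl1 hl2 (toG2 β)
      = SemidirectProduct.inl (toGP2 (psiWord n l β)) *
        SemidirectProduct.inr (Multiplicative.ofAdd (vW l β)) := by
  induction β with
  | nil =>
    have h1 : toG2 ([] : List (PIdx (n + 1))) = 1 := rfl
    have h2 : toGP2 (psiWord n l ([] : List (PIdx (n + 1)))) = 1 := rfl
    rw [h1, h2, map_one, vW_nil, map_one]
    rw [show Multiplicative.ofAdd (0 : ℕ → ZMod 2) = 1 from rfl, map_one, mul_one]
  | cons a β ih =>
    have hc : toG2 (a :: β) = PresentedGroup.of a * toG2 β := by simp [toG2]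
    rw [hc, map_mul, Psi_of hl1 hl2 a, ih, psiWord_cons, vW_cons]
    by_cases c : l = a.1.1 ∨ l = a.1.2
    · rw [if_pos c, List.nil_append, toGP2_map_twP]
      have hv : vA l a.1.1 a.1.2 = eV (del l (if l = a.1.1 then a.1.2 else a.1.1)) := by
        unfold vA
        rcases c with h | h
        · rw [if_pos h, if_pos h]
        · have h' : ¬ l = a.1.1 := by
            have := a.2.2.1; intro hh; omega
          rw [if_neg h', if_pos h, if_neg h']
      unfold fval
      rw [if_pos c, ← hv, ← mul_assoc, inr_inl_swap, TwAut_ofAdd, mul_assoc, inr_ofAdd_mul]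
    · rw [if_neg c]
      push_neg at c
      have h12 : a.1.1 < a.1.2 := a.2.2.1
      have hok : P2ok n (sort2 (del l a.1.1) (del l a.1.2)) :=
        P2ok_sort2 (del_ne (Ne.symm c.1) (Ne.symm c.2) (by omega))
          (del_pos hl1 a.2.1 (Ne.symm c.1)) (del_le hl2 (by have := a.2.2.2; omega) (Ne.symm c.1))
          (del_pos hl1 (by have := a.2.1; omega) (Ne.symm c.2))
          (del_le hl2 a.2.2.2 (Ne.symm c.2))
      have hp : pairMkS n (del l a.1.1) (del l a.1.2)
          = some ⟨sort2 (del l a.1.1) (del l a.1.2), hok⟩ := dif_pos hok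
      have hv0 : vA l a.1.1 a.1.2 = 0 := by
        unfold vA
        rw [if_neg (by omega : ¬ l = a.1.1), if_neg (by omega : ¬ l = a.1.2)]
      rw [hp, hv0, zero_add]
      rw [show ((some (⟨sort2 (del l a.1.1) (del l a.1.2), hok⟩ : PIdx n)).map
          fun p => (p, (0 : ZMod 2))).toList
        = [((⟨sort2 (del l a.1.1) (del l a.1.2), hok⟩ : PIdx n), (0 : ZMod 2))] from rfl]
      rw [List.singleton_append, toGP2_cons, toGP2_map_twP, Tw_zero]
      unfold fval
      rw [if_neg (by omega : ¬(l = a.1.1 ∨ l = a.1.2)), gpOf_eq_of hok, ← mul_assoc, inl_mul]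

end Psi16
theorem statement_11 (n l : ℕ) (hn : 3 ≤ n) (hl1 : 1 ≤ l) (hl2 : l ≤ n + 1)
    (β β' : List (PIdx (n + 1))) (hg : good2 β) (hg' : good2 β')
    (h : toG2 β = toG2 β') :
    toGP2 (psiWord n l β) = toGP2 (psiWord n l β') := by
  have h2 := congrArg (Psi n l hl1 hl2) h
  rw [Psi_eval hl1 hl2, Psi_eval hl1 hl2] at h2
  have h3 := congrArg SemidirectProduct.left h2
  simpa using h3

end GnkBrunnian
end
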